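/- arXiv:2106.13138 — 2 statements merged into one kernel-verified Lean document; each statement's English description precedes it below -/
import Mathlib

section
/- Let $\chi$ be a nonnegative Borel measure on $[0,\infty)$ and $\mathsf{q}(x) = \chi([0,x))$. Then $\sup_{x>0}\, x\,\chi([x,\infty)) < \infty$ if and only if there exists $c \in [0,\infty)$ with $\sup_{x>0}\, x \int_x^\infty |\mathsf{q}(t) - c|^2\,dt < \infty$. -/
open MeasureTheory Filter

private lemma aux_nonint {f : ℝ → ℝ} {ε n : ℝ} (hε : 0 < ε)
    (hf : ∀ t, n ≤ t → ε ≤ f t) (h : IntegrableOn f (Set.Ioi 1)) : False := by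
  have h2 := h.measure_ge_lt_top hε
  have hsub : Set.Ici (max n 2) ⊆ {t : ℝ | ε ≤ f t} :=
    fun t ht => hf t (le_trans (le_max_left _ _) ht)
  have h3 : (volume.restrict (Set.Ioi (1:ℝ))) (Set.Ici (max n 2)) < ⊤ :=
    (measure_mono hsub).trans_lt h2
  rw [Measure.restrict_apply measurableSet_Ici] at h3
  have : Set.Ici (max n 2) ∩ Set.Ioi (1:ℝ) = Set.Ici (max n 2) := by
    apply Set.inter_eq_left.2
    intro t ht
    have : (2:ℝ) ≤ t := le_trans (le_max_right _ _) ht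
    exact Set.mem_Ioi.2 (by linarith)
  rw [this, Real.volume_Ici] at h3
  simp at h3

/-- Let `χ` be a (locally finite) nonnegative Borel measure on `[0,∞)` and
`q(x) = χ([0,x))`.  Then `sup_{x>0} x χ([x,∞)) < ∞` if and only if there is a
constant `c ≥ 0` such that `sup_{x>0} x ∫_x^∞ |q(t) - c|² dt < ∞` (the tail
integrals being finite). -/
theorem stmt_8 (μ : Measure ℝ) (hneg : μ (Set.Iio (0 : ℝ)) = 0)
    (hlocfin : ∀ x : ℝ, μ (Set.Ico (0 : ℝ) x) < ⊤) :
    (∃ C : ℝ, ∀ x : ℝ, 0 < x →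
        ENNReal.ofReal x * μ (Set.Ici x) ≤ ENNReal.ofReal C) ↔
      ∃ c : ℝ, 0 ≤ c ∧ ∃ C : ℝ, ∀ x : ℝ, 0 < x →
        IntegrableOn
          (fun t : ℝ => |(μ (Set.Ico (0 : ℝ) t)).toReal - c| ^ 2)
          (Set.Ioi x) ∧
        x * ∫ t in Set.Ioi x, |(μ (Set.Ico (0 : ℝ) t)).toReal - c| ^ 2 ≤ C := by
  set q : ℝ → ℝ := fun t => (μ (Set.Ico (0:ℝ) t)).toReal with hqdef
  have hqmono : Monotone q := fun s t hst =>
    ENNReal.toReal_mono (hlocfin t).ne (measure_mono (Set.Ico_subset_Ico_right hst))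
  have huniv : μ (Set.Ici (0:ℝ)) = μ Set.univ := by
    rw [← Set.Iio_union_Ici (a := (0:ℝ)),
      measure_union (Set.Iio_disjoint_Ici le_rfl) measurableSet_Ici, hneg, zero_add]
  have hsplit : ∀ t : ℝ, 0 ≤ t → μ (Set.Ico 0 t) + μ (Set.Ici t) = μ Set.univ := by
    intro t ht
    rw [← measure_union ((Set.Iio_disjoint_Ici le_rfl).mono_left Set.Ico_subset_Iio_self)
      measurableSet_Ici, Set.Ico_union_Ici_eq_Ici ht, huniv]
  have hun : ⋃ n : ℕ, Set.Ico (0:ℝ) n = Set.Ici 0 := by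
    ext t
    simp only [Set.mem_iUnion, Set.mem_Ico, Set.mem_Ici]
    constructor
    · rintro ⟨n, hn, -⟩; exact hn
    · intro ht; obtain ⟨n, hn⟩ := exists_nat_gt t; exact ⟨n, ht, hn⟩
  have hmeaslim : Tendsto (fun n : ℕ => μ (Set.Ico (0:ℝ) n)) atTop (nhds (μ Set.univ)) := by
    have := tendsto_measure_iUnion_atTop (μ := μ)
      (s := fun n : ℕ => Set.Ico (0:ℝ) n)
      (fun a b hab => Set.Ico_subset_Ico_right (Nat.cast_le.2 hab))
    rwa [hun, huniv] at this
  constructor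
  · rintro ⟨C, hC⟩
    set C₀ := max C 0 with hC₀def
    have hC₀0 : (0:ℝ) ≤ C₀ := le_max_right _ _
    have hC' : ∀ x : ℝ, 0 < x → ENNReal.ofReal x * μ (Set.Ici x) ≤ ENNReal.ofReal C₀ :=
      fun x hx => (hC x hx).trans (ENNReal.ofReal_le_ofReal (le_max_left _ _))
    have htail1 : μ (Set.Ici (1:ℝ)) < ⊤ := by
      have := hC' 1 one_pos
      rw [ENNReal.ofReal_one, one_mul] at this
      exact this.trans_lt ENNReal.ofReal_lt_top
    have htot : μ Set.univ < ⊤ := by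
      rw [← hsplit 1 zero_le_one]
      exact ENNReal.add_lt_top.2 ⟨hlocfin 1, htail1⟩
    have htailfin : ∀ t : ℝ, μ (Set.Ici t) < ⊤ :=
      fun t => (measure_mono (Set.subset_univ _)).trans_lt htot
    set M := (μ Set.univ).toReal with hMdef
    have hreal : ∀ t : ℝ, 0 ≤ t → q t + (μ (Set.Ici t)).toReal = M := by
      intro t ht
      rw [hqdef]
      rw [← ENNReal.toReal_add (hlocfin t).ne (htailfin t).ne, hsplit t ht]
    have habs : ∀ t : ℝ, 0 < t → |q t - M| = (μ (Set.Ici t)).toReal := by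
      intro t ht
      have h0 : (0:ℝ) ≤ (μ (Set.Ici t)).toReal := ENNReal.toReal_nonneg
      have := hreal t ht.le
      rw [abs_sub_comm, abs_of_nonneg (by linarith)]
      linarith
    have hbound : ∀ t : ℝ, 0 < t → (μ (Set.Ici t)).toReal ≤ C₀ / t := by
      intro t ht
      have h1 : (ENNReal.ofReal t * μ (Set.Ici t)).toReal ≤ C₀ :=
        ENNReal.toReal_le_of_le_ofReal hC₀0 (hC' t ht)
      rw [ENNReal.toReal_mul, ENNReal.toReal_ofReal ht.le] at h1
      rw [le_div_iff₀ ht]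
      linarith [h1]
    have hqm : Measurable q := hqmono.measurable
    have hfm : Measurable fun t => |q t - M| ^ 2 :=
      ((hqm.sub measurable_const).abs.pow_const 2)
    refine ⟨M, ENNReal.toReal_nonneg, C₀ ^ 2, fun x hx => ?_⟩
    have hg : IntegrableOn (fun t : ℝ => C₀ ^ 2 * t ^ (-2:ℝ)) (Set.Ioi x) :=
      (integrableOn_Ioi_rpow_of_lt (by norm_num) hx).const_mul _
    have hdom : ∀ᵐ t ∂(volume.restrict (Set.Ioi x)),
        ‖|q t - M| ^ 2‖ ≤ C₀ ^ 2 * t ^ (-2:ℝ) := by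
      filter_upwards [ae_restrict_mem measurableSet_Ioi] with t ht
      have ht0 : 0 < t := lt_trans hx ht
      have h1 : |q t - M| ≤ C₀ / t := (habs t ht0).le.trans (hbound t ht0)
      have h2 : |q t - M| ^ 2 ≤ (C₀ / t) ^ 2 := pow_le_pow_left₀ (abs_nonneg _) h1 2
      have h3 : (C₀ / t) ^ 2 = C₀ ^ 2 * t ^ (-2:ℝ) := by
        rw [div_pow, show ((-2:ℝ)) = -(2:ℝ) by norm_num, Real.rpow_neg ht0.le,
          Real.rpow_two, div_eq_mul_inv]
      rw [Real.norm_eq_abs, abs_of_nonneg (by positivity)]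
      linarith
    have hint : IntegrableOn (fun t => |q t - M| ^ 2) (Set.Ioi x) :=
      Integrable.mono' hg (hfm.aestronglyMeasurable.restrict) hdom
    refine ⟨hint, ?_⟩
    have hmono : ∫ t in Set.Ioi x, |q t - M| ^ 2 ≤ ∫ t in Set.Ioi x, C₀ ^ 2 * t ^ (-2:ℝ) :=
      integral_mono_ae hint hg (hdom.mono fun t h => by
        rw [Real.norm_eq_abs, abs_of_nonneg (by positivity)] at h; exact h)
    have hval : ∫ t in Set.Ioi x, C₀ ^ 2 * t ^ (-2:ℝ) = C₀ ^ 2 * x⁻¹ := by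
      rw [MeasureTheory.integral_const_mul, integral_Ioi_rpow_of_lt (by norm_num) hx]
      norm_num [Real.rpow_neg_one]
    rw [hval] at hmono
    calc x * ∫ t in Set.Ioi x, |q t - M| ^ 2 ≤ x * (C₀ ^ 2 * x⁻¹) :=
          mul_le_mul_of_nonneg_left hmono hx.le
      _ = C₀ ^ 2 := by field_simp
  · rintro ⟨c, hc0, C, hC⟩
    have hCnn : 0 ≤ C := by
      have h1 := (hC 1 one_pos).2
      have h0 : 0 ≤ ∫ t in Set.Ioi (1:ℝ), |q t - c| ^ 2 :=
        integral_nonneg fun t => by positivity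
      linarith
    have htot : μ Set.univ < ⊤ := by
      by_contra h
      have htop : μ Set.univ = ⊤ := by
        simpa using (not_lt.1 h)
      rw [htop] at hmeaslim
      have hev := hmeaslim.eventually (eventually_gt_nhds
        (show ENNReal.ofReal (c+1) < ⊤ from ENNReal.ofReal_lt_top))
      obtain ⟨n, hn⟩ := hev.exists
      have hq_n : c + 1 ≤ q n := by
        have hfin := (hlocfin n).ne
        rw [show (μ (Set.Ico (0:ℝ) n)) = ENNReal.ofReal (q n) from
          (ENNReal.ofReal_toReal hfin).symm] at hn
        have := (ENNReal.ofReal_lt_ofReal_iff_of_nonneg (by linarith)).1 hn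
        linarith
      refine aux_nonint (ε := 1) one_pos (n := (n:ℝ)) ?_ (hC 1 one_pos).1
      intro t ht
      have hqt : c + 1 ≤ q t := le_trans hq_n (hqmono ht)
      have habs : 1 ≤ |q t - c| := by
        rw [abs_of_nonneg (by linarith)]; linarith
      calc (1:ℝ) = 1 ^ 2 := by norm_num
        _ ≤ |q t - c| ^ 2 := pow_le_pow_left₀ (by norm_num) habs 2
    have htailfin : ∀ t : ℝ, μ (Set.Ici t) < ⊤ :=
      fun t => (measure_mono (Set.subset_univ _)).trans_lt htot
    set M := (μ Set.univ).toReal with hMdef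
    have hreal : ∀ t : ℝ, 0 ≤ t → q t + (μ (Set.Ici t)).toReal = M := by
      intro t ht
      rw [hqdef]
      rw [← ENNReal.toReal_add (hlocfin t).ne (htailfin t).ne, hsplit t ht]
    have hqleM : ∀ t : ℝ, q t ≤ M :=
      fun t => ENNReal.toReal_mono htot.ne (measure_mono (Set.subset_univ _))
    have hceq : c = M := by
      by_contra hne
      set d := |M - c| with hddef
      have hd0 : 0 < d := abs_pos.2 (sub_ne_zero.2 fun h => hne h.symm)
      have hU : Tendsto (fun n : ℕ => q n) atTop (nhds M) :=
        (ENNReal.tendsto_toReal htot.ne).comp hmeaslim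
      obtain ⟨N, hN⟩ := (Metric.tendsto_atTop.1 hU (d/2) (by positivity))
      have hNd : |q N - M| < d / 2 := by
        have := hN N le_rfl
        rwa [Real.dist_eq] at this
      refine aux_nonint (ε := (d/2)^2) (by positivity) (n := (N:ℝ)) ?_ (hC 1 one_pos).1
      intro t ht
      have h1 : q N ≤ q t := hqmono ht
      have h2 : q t ≤ M := hqleM t
      have h3 : |q t - M| < d / 2 := by
        rw [abs_of_nonpos (by linarith)]
        rw [abs_of_nonpos (by linarith [hqleM (N:ℝ)])] at hNd
        linarith
      have h4 : d / 2 ≤ |q t - c| := by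
        have h5 : d ≤ |M - q t| + |q t - c| := abs_sub_le M (q t) c
        rw [abs_sub_comm] at h5
        linarith
      exact pow_le_pow_left₀ (by positivity) h4 2
    refine ⟨2 * Real.sqrt C, fun y hy => ?_⟩
    set r := (μ (Set.Ici y)).toReal with hrdef
    have hr0 : 0 ≤ r := ENNReal.toReal_nonneg
    have hyhalf : 0 < y / 2 := by positivity
    obtain ⟨hint, hbound⟩ := hC (y/2) hyhalf
    have hkey : ∀ t ∈ Set.Ioo (y/2) y, r ^ 2 ≤ |q t - c| ^ 2 := by
      intro t ht
      have ht0 : 0 < t := lt_trans hyhalf ht.1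
      have h1 : r ≤ (μ (Set.Ici t)).toReal :=
        ENNReal.toReal_mono (htailfin t).ne (measure_mono (Set.Ici_subset_Ici.2 ht.2.le))
      have h2 : |q t - c| = (μ (Set.Ici t)).toReal := by
        have h0 : (0:ℝ) ≤ (μ (Set.Ici t)).toReal := ENNReal.toReal_nonneg
        have := hreal t ht0.le
        rw [hceq, abs_sub_comm, abs_of_nonneg (by linarith)]
        linarith
      exact pow_le_pow_left₀ hr0 (h1.trans h2.ge) 2
    have hsub : ∫ t in Set.Ioo (y/2) y, |q t - c| ^ 2
        ≤ ∫ t in Set.Ioi (y/2), |q t - c| ^ 2 :=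
      setIntegral_mono_set hint (Filter.Eventually.of_forall fun t => by positivity)
        (HasSubset.Subset.eventuallyLE Set.Ioo_subset_Ioi_self)
    have hconst : r ^ 2 * (volume (Set.Ioo (y/2) y)).toReal
        ≤ ∫ t in Set.Ioo (y/2) y, |q t - c| ^ 2 :=
      setIntegral_ge_of_const_le_real measurableSet_Ioo
        (by rw [Real.volume_Ioo]; exact ENNReal.ofReal_ne_top) hkey
        (hint.mono_set Set.Ioo_subset_Ioi_self)
    have hvol : (volume (Set.Ioo (y/2) y)).toReal = y / 2 := by
      rw [Real.volume_Ioo, ENNReal.toReal_ofReal (by linarith)]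
      ring
    rw [hvol] at hconst
    have hfinal : (y/2) * (r ^ 2 * (y/2)) ≤ C :=
      le_trans (mul_le_mul_of_nonneg_left (hconst.trans hsub) hyhalf.le) hbound
    have h5 : (y/2 * r) ^ 2 ≤ C := by nlinarith
    have h6 : y/2 * r ≤ Real.sqrt C := (Real.le_sqrt (by positivity) hCnn).2 h5
    have h7 : y * r ≤ 2 * Real.sqrt C := by linarith
    rw [show μ (Set.Ici y) = ENNReal.ofReal r from (ENNReal.ofReal_toReal (htailfin y).ne).symm,
      ← ENNReal.ofReal_mul hy.le]
    exact ENNReal.ofReal_le_ofReal h7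
end

section
/- Let $\chi$ be a nonnegative Borel measure on $[0,\infty)$ and $\mathsf{q}(x) = \chi([0,x))$. Then $\lim_{x\to\infty} x\,\chi([x,\infty)) = 0$ if and only if there exists $c \in [0,\infty)$ with $\lim_{x\to\infty} x \int_x^\infty |\mathsf{q}(t) - c|^2\,dt = 0$. -/
open MeasureTheory

/-- Let `χ` be a (locally finite) nonnegative Borel measure on `[0,∞)` and
`q(x) = χ([0,x))`.  Then `x χ([x,∞)) → 0` as `x → ∞` if and only if there is a
constant `c ≥ 0` such that `x ∫_x^∞ |q(t) - c|² dt → 0` as `x → ∞` (the tail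
integrals being finite). -/
theorem stmt_9 (μ : Measure ℝ) (hneg : μ (Set.Iio (0 : ℝ)) = 0)
    (hlocfin : ∀ x : ℝ, μ (Set.Ico (0 : ℝ) x) < ⊤) :
    Filter.Tendsto (fun x : ℝ => ENNReal.ofReal x * μ (Set.Ici x))
        Filter.atTop (nhds 0) ↔
      ∃ c : ℝ, 0 ≤ c ∧
        (∀ x : ℝ, 0 < x →
          IntegrableOn
            (fun t : ℝ => |(μ (Set.Ico (0 : ℝ) t)).toReal - c| ^ 2)
            (Set.Ioi x)) ∧
        Filter.Tendsto
          (fun x : ℝ =>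
            x * ∫ t in Set.Ioi x, |(μ (Set.Ico (0 : ℝ) t)).toReal - c| ^ 2)
          Filter.atTop (nhds 0) := by
  classical
  set q : ℝ → ℝ := fun t => (μ (Set.Ico (0 : ℝ) t)).toReal with hq
  set T : ℝ → ℝ := fun t => (μ (Set.Ici t)).toReal with hTdef
  have hqmono : Monotone q := fun s t hst =>
    ENNReal.toReal_mono (hlocfin t).ne (measure_mono (Set.Ico_subset_Ico_right hst))
  have hqmeas : Measurable q := hqmono.measurable
  have hsplit : ∀ x : ℝ, 0 ≤ x →
      μ (Set.Ici (0 : ℝ)) = μ (Set.Ico 0 x) + μ (Set.Ici x) := by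
    intro x hx
    rw [← Set.Ico_union_Ici_eq_Ici hx]
    exact measure_union (Set.disjoint_left.2 fun a ha hb => absurd hb (not_le.2 ha.2))
      measurableSet_Ici
  have hkey : μ (Set.Ici (0 : ℝ)) ≠ ⊤ → ∀ t : ℝ, 0 ≤ t →
      |q t - (μ (Set.Ici (0 : ℝ))).toReal| = T t := by
    intro hfin t ht
    have h2 : μ (Set.Ici t) ≠ ⊤ :=
      ne_top_of_le_ne_top hfin (measure_mono (Set.Ici_subset_Ici.2 ht))
    have h3 : (μ (Set.Ici (0 : ℝ))).toReal = q t + T t := by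
      rw [hsplit t ht, ENNReal.toReal_add (hlocfin t).ne h2]
    rw [h3, show q t - (q t + T t) = -T t by ring, abs_neg,
      abs_of_nonneg ENNReal.toReal_nonneg]
  constructor
  · -- forward direction
    intro h
    have h1 : ∀ᶠ x : ℝ in Filter.atTop, ENNReal.ofReal x * μ (Set.Ici x) < 1 :=
      h.eventually_lt_const (by norm_num)
    obtain ⟨x₀, hx₀1, hx₀⟩ : ∃ x₀ : ℝ, 1 ≤ x₀ ∧ ENNReal.ofReal x₀ * μ (Set.Ici x₀) < 1 :=
      ((Filter.eventually_ge_atTop (1 : ℝ)).and h1).exists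
    have htail : μ (Set.Ici x₀) < ⊤ := by
      refine lt_of_le_of_lt (le_trans ?_ hx₀.le) (by norm_num)
      exact le_mul_of_one_le_left zero_le (ENNReal.one_le_ofReal.2 hx₀1)
    have hfin : μ (Set.Ici (0 : ℝ)) ≠ ⊤ := by
      rw [hsplit x₀ (by linarith)]
      exact (ENNReal.add_lt_top.2 ⟨hlocfin x₀, htail⟩).ne
    set c : ℝ := (μ (Set.Ici (0 : ℝ))).toReal with hcdef
    have hkey' := hkey hfin
    -- real version of the tail hypothesis
    have hreal : Filter.Tendsto (fun x : ℝ => x * T x) Filter.atTop (nhds 0) := by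
      have hcont := (ENNReal.tendsto_toReal (by simp : (0 : ENNReal) ≠ ⊤)).comp h
      simp only [ENNReal.toReal_zero] at hcont
      refine hcont.congr' ?_
      filter_upwards [Filter.eventually_ge_atTop (0 : ℝ)] with x hx
      simp [Function.comp, ENNReal.toReal_mul, ENNReal.toReal_ofReal hx, hTdef]
    have hTanti : ∀ s t : ℝ, 0 ≤ s → s ≤ t → T t ≤ T s := fun s t hs hst =>
      ENNReal.toReal_mono
        (ne_top_of_le_ne_top hfin (measure_mono (Set.Ici_subset_Ici.2 hs)))
        (measure_mono (Set.Ici_subset_Ici.2 hst))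
    -- the main quantitative estimate
    have haux : ∀ x C : ℝ, 0 < x → 0 ≤ C → (∀ t : ℝ, t ∈ Set.Ioi x → t * T t ≤ C) →
        IntegrableOn (fun t : ℝ => |q t - c| ^ 2) (Set.Ioi x) ∧
          x * ∫ t in Set.Ioi x, |q t - c| ^ 2 ≤ C ^ 2 := by
      intro x C hx hC hbd
      have hmaj : IntegrableOn (fun t : ℝ => C ^ 2 * t ^ (-2 : ℝ)) (Set.Ioi x) :=
        (integrableOn_Ioi_rpow_of_lt (by norm_num) hx).const_mul _
      have hptw : ∀ t : ℝ, t ∈ Set.Ioi x → |q t - c| ^ 2 ≤ C ^ 2 * t ^ (-2 : ℝ) := by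
        intro t ht
        have ht' : x < t := ht
        have ht0 : 0 < t := hx.trans ht'
        have hrw : C ^ 2 * t ^ (-2 : ℝ) = (C / t) ^ 2 := by
          rw [show (-2 : ℝ) = -((2 : ℕ) : ℝ) by norm_num, Real.rpow_neg ht0.le,
            Real.rpow_natCast, div_pow]
          ring
        rw [hkey' t ht0.le, hrw]
        have hTt : T t ≤ C / t := by
          rw [le_div_iff₀ ht0, mul_comm]
          exact hbd t ht
        exact pow_le_pow_left₀ ENNReal.toReal_nonneg hTt 2
      have hintf : IntegrableOn (fun t : ℝ => |q t - c| ^ 2) (Set.Ioi x) := by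
        refine hmaj.mono' ?_ ?_
        · exact (((hqmeas.sub measurable_const).abs.pow measurable_const)).aestronglyMeasurable
        · filter_upwards [ae_restrict_mem measurableSet_Ioi] with t ht
          rw [Real.norm_eq_abs, abs_of_nonneg (by positivity)]
          exact hptw t ht
      refine ⟨hintf, ?_⟩
      have hle : ∫ t in Set.Ioi x, |q t - c| ^ 2 ≤ ∫ t in Set.Ioi x, C ^ 2 * t ^ (-2 : ℝ) :=
        setIntegral_mono_on hintf hmaj measurableSet_Ioi hptw
      have hval : ∫ t in Set.Ioi x, C ^ 2 * t ^ (-2 : ℝ) = C ^ 2 * x⁻¹ := by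
        rw [MeasureTheory.integral_const_mul, integral_Ioi_rpow_of_lt (by norm_num) hx,
          show (-2 : ℝ) + 1 = -1 by norm_num, Real.rpow_neg_one]
        ring
      calc x * ∫ t in Set.Ioi x, |q t - c| ^ 2
          ≤ x * (C ^ 2 * x⁻¹) := by
            rw [← hval]; exact mul_le_mul_of_nonneg_left hle hx.le
        _ = C ^ 2 := by field_simp
    -- bounds for integrability
    have hbound : ∀ x : ℝ, 0 < x → ∃ C : ℝ, 0 ≤ C ∧ ∀ t ∈ Set.Ioi x, t * T t ≤ C := by
      intro x hx
      obtain ⟨X, hX⟩ : ∃ X : ℝ, ∀ t : ℝ, t ≥ X → t * T t < 1 :=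
        Filter.eventually_atTop.1 (hreal.eventually_lt_const (by norm_num))
      refine ⟨max 1 (max X x * T x), le_trans zero_le_one (le_max_left _ _), ?_⟩
      intro t ht
      have ht' : x < t := ht
      rcases le_or_gt X t with hXt | hXt
      · exact le_trans (hX t hXt).le (le_max_left _ _)
      · refine le_trans ?_ (le_max_right _ _)
        have h1 : t ≤ max X x := le_trans hXt.le (le_max_left _ _)
        have h2 : T t ≤ T x := hTanti x t hx.le ht'.le
        exact mul_le_mul h1 h2 ENNReal.toReal_nonneg
          (le_trans hx.le (le_max_right _ _))
      
    refine ⟨c, ENNReal.toReal_nonneg, ?_, ?_⟩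
    · intro x hx
      obtain ⟨C, hC0, hC⟩ := hbound x hx
      exact (haux x C hx hC0 hC).1
    · rw [Metric.tendsto_atTop]
      intro ε hε
      set δ : ℝ := Real.sqrt ε / 2 with hδdef
      have hδ : 0 < δ := by positivity
      have hδ2 : δ ^ 2 < ε := by
        have : δ ^ 2 = ε / 4 := by
          rw [hδdef, div_pow, Real.sq_sqrt hε.le]; norm_num
        rw [this]; linarith
      obtain ⟨X, hX⟩ : ∃ X : ℝ, ∀ t : ℝ, t ≥ X → t * T t < δ :=
        Filter.eventually_atTop.1 (hreal.eventually_lt_const hδ)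
      refine ⟨max X 1, fun x hx => ?_⟩
      have hx1 : (1 : ℝ) ≤ x := le_trans (le_max_right _ _) hx
      have hx0 : 0 < x := lt_of_lt_of_le one_pos hx1
      have hbd : ∀ t : ℝ, t ∈ Set.Ioi x → t * T t ≤ δ := fun t ht =>
        (hX t (le_trans (le_trans (le_max_left _ _) hx) (le_of_lt ht))).le
      obtain ⟨hi, hb⟩ := haux x δ hx0 hδ.le hbd
      rw [Real.dist_eq, sub_zero, abs_of_nonneg
        (mul_nonneg hx0.le (integral_nonneg fun t => by positivity))]
      exact lt_of_le_of_lt hb hδ2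
  · -- reverse direction
    rintro ⟨c, hc0, hint, htend⟩
    -- contradiction helper
    have habs : ∀ X δ : ℝ, 0 < δ →
        (∀ t : ℝ, X ≤ t → δ ≤ |q t - c| ^ 2) → False := by
      intro X δ hδ hge
      set Y : ℝ := max X 1 with hYdef
      have h1 : IntegrableOn (fun t : ℝ => |q t - c| ^ 2) (Set.Ioi Y) :=
        (hint 1 one_pos).mono_set (Set.Ioi_subset_Ioi (le_max_right _ _))
      have h2 : Integrable (fun _ : ℝ => δ) (volume.restrict (Set.Ioi Y)) := by
        refine h1.mono' aestronglyMeasurable_const ?_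
        filter_upwards [ae_restrict_mem measurableSet_Ioi] with t ht
        rw [Real.norm_eq_abs, abs_of_pos hδ]
        exact hge t (le_of_lt (lt_of_le_of_lt (le_max_left _ _) ht))
      rw [integrable_const_iff] at h2
      rcases h2 with h | h
      · exact hδ.ne' h
      · simp [isFiniteMeasure_iff, Measure.restrict_apply, Real.volume_Ioi] at h
    have hIoiUnion : (⋃ n : ℕ, Set.Ico (0 : ℝ) n) = Set.Ici 0 := by
      ext t
      simp only [Set.mem_iUnion, Set.mem_Ico, Set.mem_Ici]
      constructor
      · rintro ⟨n, h1, _⟩; exact h1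
      · intro h; obtain ⟨n, hn⟩ := exists_nat_gt t; exact ⟨n, h, hn⟩
    have hmeasto : Filter.Tendsto (fun n : ℕ => μ (Set.Ico (0 : ℝ) n))
        Filter.atTop (nhds (μ (Set.Ici 0))) := by
      have hmono : Monotone fun n : ℕ => Set.Ico (0 : ℝ) n := fun n m h =>
        Set.Ico_subset_Ico_right (Nat.cast_le.2 h)
      have := tendsto_measure_iUnion_atTop (μ := μ) hmono
      rwa [hIoiUnion] at this
    -- the measure is finite
    have hfin : μ (Set.Ici (0 : ℝ)) ≠ ⊤ := by
      intro htop
      have hev : ∀ᶠ n : ℕ in Filter.atTop,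
          ENNReal.ofReal (c + 1) < μ (Set.Ico (0 : ℝ) n) := by
        refine hmeasto.eventually_const_lt ?_
        rw [htop]; exact ENNReal.ofReal_lt_top
      obtain ⟨n, hn⟩ := hev.exists
      have hqn : c + 1 < q n := by
        rw [hq]
        exact (ENNReal.ofReal_lt_iff_lt_toReal (by linarith) (hlocfin n).ne).1 hn
      refine habs n 1 one_pos fun t ht => ?_
      have h1 : c + 1 ≤ q t := le_trans hqn.le (hqmono ht)
      have h2 : (1 : ℝ) ≤ |q t - c| := le_trans (by linarith) (le_abs_self _)
      nlinarith
    -- the limit is c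
    have hL : (μ (Set.Ici (0 : ℝ))).toReal = c := by
      by_contra hne
      set L : ℝ := (μ (Set.Ici (0 : ℝ))).toReal with hLdef
      have hqle : ∀ t : ℝ, q t ≤ L := fun t =>
        ENNReal.toReal_mono hfin (measure_mono fun a ha => ha.1)
      have hq_tendsto : Filter.Tendsto (fun n : ℕ => q n) Filter.atTop (nhds L) :=
        (ENNReal.tendsto_toReal hfin).comp hmeasto
      rcases lt_or_gt_of_ne hne with hLc | hLc
      · -- L < c
        refine habs 0 ((c - L) ^ 2) (pow_pos (by linarith) 2) fun t _ => ?_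
        have h1 : c - L ≤ |q t - c| := by
          have := hqle t
          rw [abs_sub_comm, abs_of_nonneg (by linarith)]
          linarith
        have h2 : 0 ≤ c - L := by linarith
        exact pow_le_pow_left₀ h2 h1 2
      · -- L > c
        set δ : ℝ := L - c with hδdef
        have hδ : 0 < δ := by simp [hδdef]; linarith
        have hev : ∀ᶠ n : ℕ in Filter.atTop, c + δ / 2 < q n :=
          hq_tendsto.eventually_const_lt (by simp [hδdef]; linarith)
        obtain ⟨n, hn⟩ := hev.exists
        refine habs n ((δ / 2) ^ 2) (by positivity) fun t ht => ?_
        have h1 : c + δ / 2 ≤ q t := le_trans hn.le (hqmono ht)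
        have h2 : δ / 2 ≤ |q t - c| := le_trans (by linarith) (le_abs_self _)
        exact pow_le_pow_left₀ (by positivity) h2 2
    have hkey' := hkey hfin
    rw [hL] at hkey'
    have hTanti : ∀ s t : ℝ, 0 ≤ s → s ≤ t → T t ≤ T s := fun s t hs hst =>
      ENNReal.toReal_mono
        (ne_top_of_le_ne_top hfin (measure_mono (Set.Ici_subset_Ici.2 hs)))
        (measure_mono (Set.Ici_subset_Ici.2 hst))
    -- main estimate
    have hest : ∀ x : ℝ, 0 < x →
        (x * T (2 * x)) ^ 2 ≤ x * ∫ t in Set.Ioi x, |q t - c| ^ 2 := by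
      intro x hx
      have hint_x := hint x hx
      have hsub : Set.Ioc x (2 * x) ⊆ Set.Ioi x := Set.Ioc_subset_Ioi_self
      have hint_sub : IntegrableOn (fun t : ℝ => |q t - c| ^ 2) (Set.Ioc x (2 * x)) :=
        hint_x.mono_set hsub
      have h1 : ∫ t in Set.Ioc x (2 * x), |q t - c| ^ 2 ≤
          ∫ t in Set.Ioi x, |q t - c| ^ 2 := by
        refine setIntegral_mono_set hint_x ?_ (Filter.Eventually.of_forall hsub)
        exact Filter.Eventually.of_forall fun t => by positivity
      have h2 : ∫ t in Set.Ioc x (2 * x), (T (2 * x)) ^ 2 ≤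
          ∫ t in Set.Ioc x (2 * x), |q t - c| ^ 2 := by
        refine setIntegral_mono_on (integrableOn_const (ne_of_lt ?_)) hint_sub
          measurableSet_Ioc ?_
        · rw [Real.volume_Ioc]; exact ENNReal.ofReal_lt_top
        · intro t ht
          have ht0 : 0 < t := hx.trans ht.1
          rw [hkey' t ht0.le]
          exact pow_le_pow_left₀ ENNReal.toReal_nonneg
            (hTanti t (2 * x) ht0.le ht.2) 2
      have h3 : ∫ t in Set.Ioc x (2 * x), (T (2 * x)) ^ 2 = x * (T (2 * x)) ^ 2 := by
        rw [setIntegral_const, measureReal_def, Real.volume_Ioc, show 2 * x - x = x by ring,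
          ENNReal.toReal_ofReal hx.le, smul_eq_mul]
      have h4 : x * (T (2 * x)) ^ 2 ≤ ∫ t in Set.Ioi x, |q t - c| ^ 2 :=
        h3 ▸ le_trans h2 h1
      calc (x * T (2 * x)) ^ 2 = x * (x * (T (2 * x)) ^ 2) := by ring
        _ ≤ x * ∫ t in Set.Ioi x, |q t - c| ^ 2 :=
            mul_le_mul_of_nonneg_left h4 hx.le
    have hsq : Filter.Tendsto (fun x : ℝ => (x * T (2 * x)) ^ 2)
        Filter.atTop (nhds 0) := by
      refine squeeze_zero' (Filter.Eventually.of_forall fun x => by positivity) ?_ htend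
      filter_upwards [Filter.eventually_gt_atTop (0 : ℝ)] with x hx
      exact hest x hx
    have habs0 : Filter.Tendsto (fun x : ℝ => |x * T (2 * x)|)
        Filter.atTop (nhds 0) := by
      have := (Real.continuous_sqrt.tendsto 0).comp hsq
      simpa [Function.comp_def, Real.sqrt_sq_eq_abs] using this
    have hmain : Filter.Tendsto (fun x : ℝ => x * T (2 * x)) Filter.atTop (nhds 0) := by
      refine habs0.congr' ?_
      filter_upwards [Filter.eventually_ge_atTop (0 : ℝ)] with x hx
      exact abs_of_nonneg (mul_nonneg hx ENNReal.toReal_nonneg)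
    have hhalf : Filter.Tendsto (fun y : ℝ => y / 2 * T (2 * (y / 2)))
        Filter.atTop (nhds 0) :=
      hmain.comp (Filter.tendsto_id.atTop_div_const two_pos)
    have hT0 : Filter.Tendsto (fun y : ℝ => y * T y) Filter.atTop (nhds 0) := by
      have h2 := hhalf.const_mul (2 : ℝ)
      rw [mul_zero] at h2
      refine h2.congr fun y => ?_
      rw [show 2 * (y / 2) = y by ring]; ring
    have hfinal := (ENNReal.continuous_ofReal.tendsto 0).comp hT0
    rw [ENNReal.ofReal_zero] at hfinal
    refine hfinal.congr' ?_
    filter_upwards [Filter.eventually_ge_atTop (0 : ℝ)] with y hy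
    have hne : μ (Set.Ici y) ≠ ⊤ :=
      ne_top_of_le_ne_top hfin (measure_mono (Set.Ici_subset_Ici.2 hy))
    simp only [Function.comp]
    rw [ENNReal.ofReal_mul hy, hTdef, ENNReal.ofReal_toReal hne]
end
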